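/- For α, β ∈ ℝ, if the 2-cocycles Ω_α and Ω_β on ℚ² (defined by Ω_α(v,w) = exp(2πiα·det(v,w))) are cohomologous, i.e., there exists φ : ℚ² → S¹ with Ω_β(v,w) = φ(v)φ(w)φ(v+w)⁻¹ Ω_α(v,w) for all v,w, then α = β. -/

import Mathlib

open Complex

/-- The 2-cocycle `Ω_α(v, w) = exp(2πiα·det(v, w))` on `ℚ²`, where
`det(v, w) = v₀w₁ − v₁w₀`. -/
noncomputable def OmegaAlpha (α : ℝ) (v w : Fin 2 → ℚ) : ℂ :=
  Complex.exp (2 * Real.pi * Complex.I * (α : ℂ) *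
    ((v 0 * w 1 - v 1 * w 0 : ℚ) : ℂ))

/-- If the 2-cocycles `Ω_α` and `Ω_β` on `ℚ²` are cohomologous, then `α = β`. -/
theorem omegaAlpha_cohomologous_imp_eq (α β : ℝ) (φ : (Fin 2 → ℚ) → ℂ)
    (hmod : ∀ v, ‖φ v‖ = 1)
    (hcob : ∀ v w : Fin 2 → ℚ,
      OmegaAlpha β v w = φ v * φ w * (φ (v + w))⁻¹ * OmegaAlpha α v w) :
    α = β := by
  have h2pi : (2 * (Real.pi : ℂ) * Complex.I) ≠ 0 :=
    mul_ne_zero (mul_ne_zero two_ne_zero (by exact_mod_cast Real.pi_ne_zero)) Complex.I_ne_zero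
  have key : ∀ q : ℚ, ∃ n : ℤ, (β - α) * (2 * (q : ℝ)) = n := by
    intro q
    have h1 := hcob ![q, 0] ![0, 1]
    have h2 := hcob ![0, 1] ![q, 0]
    have hadd : (![0, 1] + ![q, 0] : Fin 2 → ℚ) = ![q, 0] + ![0, 1] := add_comm _ _
    rw [hadd, show φ ![0, 1] * φ ![q, 0] = φ ![q, 0] * φ ![0, 1] from mul_comm _ _] at h2
    simp only [OmegaAlpha, Matrix.cons_val_zero, Matrix.cons_val_one, Matrix.head_cons] at h1 h2
    push_cast at h1 h2
    ring_nf at h1 h2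
    set B : ℂ := ↑Real.pi * Complex.I * ↑β * ↑q * 2 with hB
    set C : ℂ := ↑Real.pi * Complex.I * ↑q * ↑α * 2 with hC
    have hcc : cexp B * cexp (-C) = cexp (-B) * cexp C := by rw [h1, h2]; ring
    have h3 : cexp (B + -C) = cexp (-B + C) := by
      rw [Complex.exp_add, Complex.exp_add]; exact hcc
    have h4 : cexp ((B + -C) - (-B + C)) = 1 := by
      rw [Complex.exp_sub, h3, div_self (Complex.exp_ne_zero _)]
    obtain ⟨n, hn⟩ := Complex.exp_eq_one_iff.mp h4
    refine ⟨n, ?_⟩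
    have h5 : (2 * (Real.pi : ℂ) * Complex.I) * (((β - α) * (2 * (q : ℝ)) : ℝ) : ℂ) =
        (2 * (Real.pi : ℂ) * Complex.I) * (n : ℂ) := by
      rw [hB, hC] at hn
      push_cast
      linear_combination hn
    have := mul_left_cancel₀ h2pi h5
    exact_mod_cast this
  by_contra hne
  set t := β - α with ht
  have ht0 : t ≠ 0 := sub_ne_zero.mpr (Ne.symm hne)
  obtain ⟨m, hm⟩ := exists_nat_gt |t|
  have hm0 : (0 : ℝ) < m := lt_of_le_of_lt (abs_nonneg t) hm
  obtain ⟨n, hn⟩ := key (1 / (2 * m))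
  have hq : ((1 / (2 * (m : ℚ)) : ℚ) : ℝ) = 1 / (2 * m) := by push_cast; ring
  rw [hq] at hn
  have hmne : (m : ℝ) ≠ 0 := ne_of_gt hm0
  have htm : t = m * n := by field_simp at hn; linarith [hn]
  have hn0 : n ≠ 0 := by
    rintro rfl
    simp at htm
    exact ht0 htm
  have : (m : ℝ) ≤ |t| := by
    have h1 : (1 : ℝ) ≤ |(n : ℝ)| := by
      rw [← Int.cast_abs]; exact_mod_cast Int.one_le_abs hn0
    calc (m : ℝ) = m * 1 := by ring
    _ ≤ |(m : ℝ)| * |(n : ℝ)| := by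
        rw [abs_of_pos hm0]; exact mul_le_mul_of_nonneg_left h1 (le_of_lt hm0)
    _ = |t| := by rw [htm, abs_mul]
  linarith
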